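/- Let r ≥ 3, n = p_1^{n_1}⋯p_r^{n_r} with primes p_1 < ... < p_r, and β_a^s defined by β_a^s = φ(n) + (n/(p_1⋯p_r))·(1/p_a^{s-1})·[ (p_1⋯p_r)/p_a + φ((p_1⋯p_r)/p_a)·(p_a^{s-1} − 2) ]. Then β_r^1 < β_1^{n_1}. -/

import Mathlib

lemma tot_prod (p : ℕ → ℕ) (s : Finset ℕ) (hp : ∀ i ∈ s, (p i).Prime)
    (hinj : ∀ i ∈ s, ∀ j ∈ s, i ≠ j → p i ≠ p j) :
    Nat.totient (∏ i ∈ s, p i) = ∏ i ∈ s, (p i - 1) := by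
  induction s using Finset.induction_on with
  | empty => simp
  | @insert a s ha ih =>
    have hcop : (p a).Coprime (∏ i ∈ s, p i) :=
      Nat.Coprime.prod_right fun i hi =>
        (Nat.coprime_primes (hp a (Finset.mem_insert_self a s))
          (hp i (Finset.mem_insert_of_mem hi))).2
          (hinj a (Finset.mem_insert_self a s) i (Finset.mem_insert_of_mem hi)
            (by rintro rfl; exact ha hi))
    rw [Finset.prod_insert ha, Finset.prod_insert ha, Nat.totient_mul hcop,
      Nat.totient_prime (hp a (Finset.mem_insert_self a s)),
      ih (fun i hi => hp i (Finset.mem_insert_of_mem hi))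
        (fun i hi j hj hij => hinj i (Finset.mem_insert_of_mem hi) j (Finset.mem_insert_of_mem hj) hij)]

lemma telescope (p : ℕ → ℕ) (a K : ℕ) (ha : 2 ≤ a)
    (hp : ∀ i, 1 ≤ i → i ≤ K → a + 2*(i-1) ≤ p i) :
    ∀ k, 1 ≤ k → k ≤ K →
      (a - 1) * ∏ i ∈ Finset.Icc 1 k, p i ≤ (a + 2*k - 1) * ∏ i ∈ Finset.Icc 1 k, (p i - 1) := by
  intro k hk
  induction k, hk using Nat.le_induction with
  | base =>
    intro h1K
    simp only [Finset.Icc_self, Finset.prod_singleton]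
    have h1 := hp 1 le_rfl h1K
    have h2 : a ≤ p 1 := by omega
    have h3 : 1 ≤ p 1 := by omega
    zify [show 1 ≤ a by omega, h3, show 1 ≤ a + 2*1 by omega]
    have h2' : (a:ℤ) ≤ p 1 := by exact_mod_cast h2
    have ha' : (2:ℤ) ≤ a := by exact_mod_cast ha
    nlinarith [h2', ha']
  | succ k hk ih =>
    intro hK
    have ihh := ih (by omega)
    have hpk := hp (k+1) (by omega) hK
    rw [Finset.prod_Icc_succ_top (by omega : 1 ≤ k + 1),
        Finset.prod_Icc_succ_top (by omega : 1 ≤ k + 1)]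
    have hP : 0 < ∏ i ∈ Finset.Icc 1 k, p i := by
      apply Finset.prod_pos
      intro i hi
      simp [Finset.mem_Icc] at hi
      have := hp i hi.1 (by omega)
      omega
    set Pk := ∏ i ∈ Finset.Icc 1 k, p i with hPk
    set Fk := ∏ i ∈ Finset.Icc 1 k, (p i - 1) with hFk
    simp only [Nat.add_sub_cancel] at hpk
    have h2 : 2 ≤ p (k+1) := by omega
    zify [show 1 ≤ a by omega, show 1 ≤ p (k+1) by omega,
      show 1 ≤ a + 2*k by omega, show 1 ≤ a + 2*(k+1) by omega] at ihh hP ⊢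
    have hFq : (0:ℤ) ≤ (Fk:ℤ) := Int.natCast_nonneg _
    have hpkq : (a:ℤ) + 2*k ≤ (p (k+1):ℤ) := by exact_mod_cast hpk
    nlinarith [ihh, hP, hFq, hpkq, mul_le_mul_of_nonneg_right hpkq hFq]

noncomputable def beta (r : ℕ) (p e : ℕ → ℕ) (a s : ℕ) : ℚ :=
  (Nat.totient (∏ i ∈ Finset.range r, p i ^ e i) : ℚ) +
    ((∏ i ∈ Finset.range r, p i ^ e i : ℕ) : ℚ) /
        ((∏ i ∈ Finset.range r, p i : ℕ) : ℚ) *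
      (1 / (p a : ℚ) ^ (s - 1)) *
      (((∏ i ∈ Finset.range r, p i : ℕ) : ℚ) / (p a : ℚ) +
        (Nat.totient ((∏ i ∈ Finset.range r, p i) / p a) : ℚ) *
          ((p a : ℚ) ^ (s - 1) - 2))

set_option maxHeartbeats 1000000 in
theorem stmt_13 (r : ℕ) (hr : 3 ≤ r) (p e : ℕ → ℕ)
    (hp : ∀ i < r, (p i).Prime)
    (hmono : ∀ i j, i < j → j < r → p i < p j)
    (he : ∀ i < r, 1 ≤ e i) :
    beta r p e (r - 1) 1 < beta r p e 0 (e 0) := by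
  have hr1 : r - 1 < r := by omega
  have hr2 : 1 ≤ r - 2 := by omega
  have hpp : ∀ i < r, 2 ≤ p i := fun i hi => (hp i hi).two_le
  have hodd : ∀ i, 1 ≤ i → i < r → p i % 2 = 1 := by
    intro i h1 h2
    have h3 : p 0 < p i := hmono 0 i h1 h2
    have h4 : 2 ≤ p 0 := hpp 0 (by omega)
    have h5 := Nat.odd_iff.mp (Nat.Prime.odd_of_ne_two (hp i h2) (by omega))
    exact h5
  have gap : ∀ i j, 1 ≤ i → i ≤ j → j < r → p i + 2*(j-i) ≤ p j := by
    intro i j h1 hij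
    induction j, hij using Nat.le_induction with
    | base => intro _; simp
    | succ j hj ih =>
      intro hjr
      have h4 := ih (by omega)
      have h5 : p j < p (j+1) := hmono j (j+1) (by omega) hjr
      have ho1 : p j % 2 = 1 := hodd j (by omega) (by omega)
      have ho2 : p (j+1) % 2 = 1 := hodd (j+1) (by omega) hjr
      omega
  simp only [beta]
  set P := ∏ i ∈ Finset.range r, p i with hP
  set N := ∏ i ∈ Finset.range r, p i ^ e i with hN
  set M := ∏ i ∈ Finset.Icc 1 (r-2), p i with hM
  set F := ∏ i ∈ Finset.Icc 1 (r-2), (p i - 1) with hF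
  have h0nm : (0:ℕ) ∉ Finset.Icc 1 (r-2) := by simp
  have hrnm : r-1 ∉ Finset.Icc 1 (r-2) := by
    simp only [Finset.mem_Icc, not_and]; omega
  have hs1 : (Finset.range r).erase (r-1) = insert 0 (Finset.Icc 1 (r-2)) := by
    ext i
    simp only [Finset.mem_erase, Finset.mem_insert, Finset.mem_Icc, Finset.mem_range]
    omega
  have hs2 : (Finset.range r).erase 0 = insert (r-1) (Finset.Icc 1 (r-2)) := by
    ext i
    simp only [Finset.mem_erase, Finset.mem_insert, Finset.mem_Icc, Finset.mem_range]
    omega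
  have hP1 : P = p (r-1) * (p 0 * M) := by
    rw [hP, ← Finset.mul_prod_erase _ _ (Finset.mem_range.2 hr1), hs1,
      Finset.prod_insert h0nm]
  have hP2 : P = p 0 * (p (r-1) * M) := by
    rw [hP, ← Finset.mul_prod_erase _ _ (Finset.mem_range.2 (by omega : 0 < r)), hs2,
      Finset.prod_insert hrnm]
  have hd1 : P / p (r-1) = p 0 * M := by
    rw [hP1, Nat.mul_div_cancel_left _ (by have := hpp (r-1) hr1; omega)]
  have hd2 : P / p 0 = p (r-1) * M := by
    rw [hP2, Nat.mul_div_cancel_left _ (by have := hpp 0 (by omega); omega)]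
  have hinj : ∀ i j, i < r → j < r → i ≠ j → p i ≠ p j := by
    intro i j hi hj hij
    rcases Nat.lt_or_ge i j with h | h
    · exact (hmono i j h hj).ne
    · exact (hmono j i (by omega) hi).ne'
  have hmem1 : ∀ i ∈ insert 0 (Finset.Icc 1 (r-2)), i < r := by
    intro i hi
    simp only [Finset.mem_insert, Finset.mem_Icc] at hi
    omega
  have hmem2 : ∀ i ∈ insert (r-1) (Finset.Icc 1 (r-2)), i < r := by
    intro i hi
    simp only [Finset.mem_insert, Finset.mem_Icc] at hi
    omega
  have htot1 : Nat.totient (p 0 * M) = (p 0 - 1) * F := by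
    have h := tot_prod p (insert 0 (Finset.Icc 1 (r-2)))
      (fun i hi => hp i (hmem1 i hi))
      (fun i hi j hj hij => hinj i j (hmem1 i hi) (hmem1 j hj) hij)
    rwa [Finset.prod_insert h0nm, Finset.prod_insert h0nm] at h
  have htot2 : Nat.totient (p (r-1) * M) = (p (r-1) - 1) * F := by
    have h := tot_prod p (insert (r-1) (Finset.Icc 1 (r-2)))
      (fun i hi => hp i (hmem2 i hi))
      (fun i hi j hj hij => hinj i j (hmem2 i hi) (hmem2 j hj) hij)
    rwa [Finset.prod_insert hrnm, Finset.prod_insert hrnm] at h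
  -- telescoping
  have htel := telescope p (p 1) (r-2) (hpp 1 (by omega))
    (fun i h1 h2 => gap 1 i le_rfl h1 (by omega)) (r-2) hr2 le_rfl
  -- numeric setup over ℚ
  set q0 : ℚ := (p 0 : ℚ) with hq0d
  set qr : ℚ := (p (r-1) : ℚ) with hqrd
  set q1 : ℚ := (p 1 : ℚ) with hq1d
  set m : ℚ := (M : ℚ) with hmd
  set f : ℚ := (F : ℚ) with hfd
  have hq0 : 2 ≤ q0 := by rw [hq0d]; exact_mod_cast hpp 0 (by omega)
  have hq01 : q0 + 1 ≤ q1 := by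
    have := hmono 0 1 (by omega) (by omega)
    rw [hq0d, hq1d]
    exact_mod_cast this
  have hFpos : 0 < F := by
    rw [hF]
    apply Finset.prod_pos
    intro i hi
    simp only [Finset.mem_Icc] at hi
    have := hpp i (by omega)
    omega
  have hMF : F < M := by
    rw [hM, hF]
    apply Finset.prod_lt_prod_of_nonempty
    · intro i hi
      simp only [Finset.mem_Icc] at hi
      have := hpp i (by omega); omega
    · intro i hi
      simp only [Finset.mem_Icc] at hi
      have := hpp i (by omega); omega
    · exact ⟨1, by simp only [Finset.mem_Icc]; omega⟩
  have hfpos : 0 < f := by rw [hfd]; exact_mod_cast hFpos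
  have hmf : f < m := by rw [hfd, hmd]; exact_mod_cast hMF
  have kq : ℚ := ((r-2 : ℕ) : ℚ)
  have hqr : q1 + 2*((r-2:ℕ):ℚ) ≤ qr := by
    have h := gap 1 (r-1) le_rfl (by omega) hr1
    have h2 : r - 1 - 1 = r - 2 := by omega
    rw [h2] at h
    rw [hq1d, hqrd]
    exact_mod_cast h
  have htelq : (q1 - 1) * m ≤ (q1 + 2*((r-2:ℕ):ℚ) - 1) * f := by
    have h1 : 1 ≤ p 1 := by have := hpp 1 (by omega); omega
    have h2 : 1 ≤ p 1 + 2*(r-2) := by omega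
    rw [hq1d, hmd, hfd]
    push_cast [Nat.cast_sub h1, Nat.cast_sub h2]
    exact_mod_cast htel
  -- positivity of constants
  have hPpos : 0 < P := by
    rw [hP]; apply Finset.prod_pos; intro i hi
    have := hpp i (Finset.mem_range.1 hi); omega
  have hNpos : 0 < N := by
    rw [hN]; apply Finset.prod_pos; intro i hi
    have := hpp i (Finset.mem_range.1 hi)
    positivity
  have hC : 0 < (N:ℚ)/(P:ℚ) := by
    apply div_pos <;> exact_mod_cast ‹_›
  set t : ℚ := q0 ^ (e 0 - 1) with htd
  have htpos : 0 < t := by rw [htd]; positivity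
  have htge1 : 1 ≤ t := by rw [htd]; exact one_le_pow₀ (by linarith)
  clear_value t
  have hq1' : q0 ≤ q1 - 1 := by linarith
  have key : q0 * m < (q0 + qr - 2) * f := by
    have hpos1 : (0:ℚ) < q1 - 1 := by linarith
    have c1 : (q1-1) * (q0 * m) ≤ q0 * ((q1 + 2*((r-2:ℕ):ℚ) - 1) * f) := by
      calc (q1-1) * (q0 * m) = q0 * ((q1-1)*m) := by ring
        _ ≤ q0 * ((q1 + 2*((r-2:ℕ):ℚ) - 1) * f) :=
            mul_le_mul_of_nonneg_left htelq (by linarith)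
    have c2 : q0 * ((q1 + 2*((r-2:ℕ):ℚ) - 1) * f) < (q1-1) * ((q0 + qr - 2) * f) := by
      have hk : (0:ℚ) ≤ ((r-2:ℕ):ℚ) := Nat.cast_nonneg _
      have h3 : q1 + 2*((r-2:ℕ):ℚ) ≤ q0 + qr - 2 := by linarith
      have hs : q0 * (q1 + 2*((r-2:ℕ):ℚ) - 1) < (q1-1) * (q0 + qr - 2) := by
        nlinarith [mul_nonneg (by linarith : (0:ℚ) ≤ q1 - 1 - q0)
            (by linarith : (0:ℚ) ≤ q1 + 2*((r-2:ℕ):ℚ) - 1),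
          mul_nonneg (by linarith : (0:ℚ) ≤ q1 - 1)
            (by linarith : (0:ℚ) ≤ q0 + qr - 2 - (q1 + 2*((r-2:ℕ):ℚ)))]
      have hfin := mul_lt_mul_of_pos_right hs hfpos
      nlinarith [hfin]
    have := lt_of_le_of_lt c1 c2
    exact lt_of_mul_lt_mul_left this (by linarith)
  have hB : q0 * m + qr * f < qr * m + q0 * f := by
    have h1 : 0 < qr - q0 := by
      have hk : (0:ℚ) ≤ ((r-2:ℕ):ℚ) := Nat.cast_nonneg _
      linarith
    nlinarith [mul_pos h1 (by linarith : (0:ℚ) < m - f)]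
  -- rewriting casts
  have hqr0 : qr ≠ 0 := by
    have : (2:ℚ) ≤ qr := by rw [hqrd]; exact_mod_cast hpp (r-1) hr1
    linarith
  have hq00 : q0 ≠ 0 := by linarith
  have e1 : (P:ℚ)/qr = q0 * m := by
    rw [hP1]; push_cast; rw [hq0d, hmd, hqrd, mul_div_cancel_left₀]
    have h9 : p (r-1) ≠ 0 := by have := hpp (r-1) hr1; omega
    exact_mod_cast h9
  have e2 : (P:ℚ)/q0 = qr * m := by
    rw [hP2]; push_cast; rw [hq0d, hmd, hqrd, mul_div_cancel_left₀]
    have h9 : p 0 ≠ 0 := by have := hpp 0 (by omega); omega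
    exact_mod_cast h9
  have e3 : ((P / p (r-1)).totient : ℚ) = (q0 - 1) * f := by
    rw [hd1, htot1, hq0d, hfd]
    push_cast [Nat.cast_sub (by have := hpp 0 (by omega); omega : 1 ≤ p 0)]
    ring
  have e4 : ((P / p 0).totient : ℚ) = (qr - 1) * f := by
    rw [hd2, htot2, hqrd, hfd]
    push_cast [Nat.cast_sub (by have := hpp (r-1) hr1; omega : 1 ≤ p (r-1))]
    ring
  rw [e1, e2, e3, e4]
  apply add_lt_add_right
  have hq : qr ^ (1 - 1) = (1:ℚ) := by norm_num
  rw [hq]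
  have core : (q0 * m + (q0 - 1) * f * (1 - 2)) * t <
      qr * m + (qr - 1) * f * (t - 2) := by
    nlinarith [key, hB, htge1, hfpos,
      mul_nonneg (by linarith : (0:ℚ) ≤ t - 1)
        (by linarith : (0:ℚ) ≤ (q0 + qr - 2) * f - q0 * m)]
  rw [← sub_pos]
  have heq : (N:ℚ) / (P:ℚ) * (1 / t) * (qr * m + (qr - 1) * f * (t - 2)) -
      (N:ℚ) / (P:ℚ) * (1 / 1) * (q0 * m + (q0 - 1) * f * (1 - 2)) =
      (N:ℚ) / (P:ℚ) * (1 / t) *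
        ((qr * m + (qr - 1) * f * (t - 2)) - (q0 * m + (q0 - 1) * f * (1 - 2)) * t) := by
    field_simp
  rw [heq]
  exact mul_pos (mul_pos hC (by positivity)) (by linarith [core])
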